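/- For every complex number r and all integers m ≥ 1, n ≥ 1: Σ_{k=0}^{n} (−1)^k C(r−1, k) · Σ_{j=m}^{k+1} C(k, j−1) s(j,m)/j! = (−1)^n C(r−1, n)·(1/m!)·H_{n+1}(m) − (1/m!)·Σ_{k=0}^{n} (−1)^k C(r, k)·H_k(m), where C(r,k) denotes the generalized binomial coefficient. -/

import Mathlib

open Finset

/-- Multiple harmonic-like numbers `H_n(m)`: the sum of `1/(k_1 ⋯ k_m)` over all
`m`-tuples of positive integers with `k_1 + ⋯ + k_m ≤ n`. -/
def Hml (n m : ℕ) : ℚ :=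
  ∑ k ∈ (Fintype.piFinset fun _ : Fin m => Finset.Icc 1 n).filter
      (fun k => ∑ i, k i ≤ n),
    ∏ i, (1 : ℚ) / (k i : ℚ)

/-- The `n`-th harmonic number. -/
def harm (n : ℕ) : ℚ := ∑ j ∈ Finset.Icc 1 n, (1 : ℚ) / (j : ℚ)

/-- The `n`-th second-order harmonic number. -/
def harm2 (n : ℕ) : ℚ := ∑ j ∈ Finset.Icc 1 n, (1 : ℚ) / (j : ℚ) ^ 2

/-- The `n`-th odd harmonic number. -/
def oddharm (n : ℕ) : ℚ := ∑ k ∈ Finset.Icc 1 n, (1 : ℚ) / (2 * (k : ℚ) - 1)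

/-- Signed Stirling numbers of the first kind. -/
def stirlingFirst : ℕ → ℕ → ℤ
  | 0, 0 => 1
  | 0, _ + 1 => 0
  | _ + 1, 0 => 0
  | n + 1, k + 1 => stirlingFirst n k - n * stirlingFirst n (k + 1)

/-- Generalized binomial coefficient `C(r, k) = r(r−1)⋯(r−k+1)/k!`. -/
noncomputable def gchoose (r : ℂ) (k : ℕ) : ℂ :=
  (∏ i ∈ Finset.range k, (r - i)) / (k.factorial : ℂ)

/-! ### Auxiliary material -/

open Polynomial

/-- Unsigned Stirling numbers of the first kind. -/
def cS : ℕ → ℕ → ℕ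
  | 0, 0 => 1
  | 0, _ + 1 => 0
  | _ + 1, 0 => 0
  | n + 1, k + 1 => cS n k + n * cS n (k + 1)

lemma stirlingFirst_zero_right (n : ℕ) : stirlingFirst n 0 = if n = 0 then 1 else 0 := by
  cases n <;> simp [stirlingFirst]

lemma stirlingFirst_eq_zero_of_lt : ∀ n m, n < m → stirlingFirst n m = 0 := by
  intro n
  induction n with
  | zero => intro m hm; obtain ⟨m, rfl⟩ := Nat.exists_eq_add_of_lt hm; simp [stirlingFirst]
  | succ n ih =>
      intro m hm
      obtain ⟨k, rfl⟩ : ∃ k, m = k + 1 := ⟨m - 1, by omega⟩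
      rw [stirlingFirst, ih k (by omega), ih (k+1) (by omega)]
      ring

lemma descPochhammer_coeff (n : ℕ) : ∀ m : ℕ,
    (descPochhammer ℚ n).coeff m = (stirlingFirst n m : ℚ) := by
  induction n with
  | zero =>
      intro m
      cases m <;> simp [stirlingFirst, coeff_one]
  | succ n ih =>
      intro m
      have hX : (n : ℚ[X]) = C (n : ℚ) := by simp
      rw [descPochhammer_succ_right, hX, mul_sub, coeff_sub, coeff_mul_C, ih]
      cases m with
      | zero =>
          rw [Polynomial.mul_coeff_zero, Polynomial.coeff_X_zero, mul_zero,
            stirlingFirst_zero_right, stirlingFirst_zero_right]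
          cases n <;> simp [stirlingFirst]
      | succ j =>
          rw [Polynomial.coeff_mul_X, ih, stirlingFirst]
          push_cast
          ring

lemma ascPochhammer_coeff (n : ℕ) : ∀ m : ℕ,
    (ascPochhammer ℚ n).coeff m = (cS n m : ℚ) := by
  induction n with
  | zero =>
      intro m
      cases m <;> simp [cS, coeff_one]
  | succ n ih =>
      intro m
      have hX : (n : ℚ[X]) = C (n : ℚ) := by simp
      rw [ascPochhammer_succ_right, hX, mul_add, coeff_add, coeff_mul_C, ih]
      cases m with
      | zero =>
          rw [Polynomial.mul_coeff_zero, Polynomial.coeff_X_zero, mul_zero,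
            zero_add]
          cases n <;> simp [cS]
      | succ j =>
          rw [Polynomial.coeff_mul_X, ih, cS]
          push_cast
          ring

/-- Vandermonde's identity in the form we need. -/
lemma nat_vandermonde (k N : ℕ) :
    ∑ j ∈ Finset.Icc 1 (k+1), k.choose (j-1) * N.choose j = (N+k).choose (k+1) := by
  rw [Nat.add_choose_eq, Finset.Nat.sum_antidiagonal_eq_sum_range_succ_mk]
  have h0 : Finset.range (k+2) = insert 0 (Finset.Icc 1 (k+1)) := by
    ext x; simp [Finset.mem_range, Finset.mem_Icc]; omega
  rw [h0, Finset.sum_insert (by simp)]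
  have : N.choose 0 * k.choose (k+1-0) = 0 := by simp [Nat.choose_eq_zero_of_lt]
  rw [this, zero_add]
  apply Finset.sum_congr rfl
  intro j hj
  simp only [Finset.mem_Icc] at hj
  have h1 : k + 1 - j = k - (j - 1) := by omega
  have h2 : j - 1 ≤ k := by omega
  rw [h1, Nat.choose_symm h2, mul_comm]

lemma Lpoly (k : ℕ) :
    ∑ j ∈ Finset.Icc 1 (k+1), C ((k.choose (j-1) : ℚ) / (j.factorial : ℚ)) * descPochhammer ℚ j
      = C (((k+1).factorial : ℚ)⁻¹) * ascPochhammer ℚ (k+1) := by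
  apply Polynomial.eq_of_infinite_eval_eq
  apply Set.Infinite.mono (s := Set.range (Nat.cast : ℕ → ℚ))
  · rintro _ ⟨N, rfl⟩
    have hfac : ∀ t : ℕ, ((t.factorial : ℚ)) ≠ 0 := fun t =>
      Nat.cast_ne_zero.2 t.factorial_ne_zero
    simp only [eval_finset_sum, eval_mul, eval_C, Set.mem_setOf_eq]
    have hL : ∀ j ∈ Finset.Icc 1 (k+1),
        (k.choose (j-1) : ℚ) / (j.factorial : ℚ) * (descPochhammer ℚ j).eval (N : ℚ)
          = (k.choose (j-1) * N.choose j : ℕ) := by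
      intro j _
      rw [descPochhammer_eval_eq_descFactorial]
      have : (N.descFactorial j : ℚ) = (j.factorial : ℚ) * (N.choose j : ℚ) := by
        rw_mod_cast [Nat.descFactorial_eq_factorial_mul_choose]
      rw [this]
      push_cast
      field_simp
    rw [Finset.sum_congr rfl hL, ← Nat.cast_sum, nat_vandermonde]
    have hA : (ascPochhammer ℚ (k+1)).eval (N : ℚ) = (N.ascFactorial (k+1) : ℚ) := by
      rw [← ascPochhammer_eval_cast, ascPochhammer_nat_eq_ascFactorial]
    rw [hA]
    have h2 : N.ascFactorial (k+1) = (N + k).descFactorial (k+1) := by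
      have h3 := Nat.add_descFactorial_eq_ascFactorial' N (k+1)
      rw [show N + (k+1) - 1 = N + k by omega] at h3
      omega
    rw [h2, Nat.descFactorial_eq_factorial_mul_choose]
    push_cast
    rw [inv_mul_eq_div, mul_comm, mul_div_assoc, div_self (by positivity), mul_one]
  · exact Set.infinite_range_of_injective (f := (Nat.cast : ℕ → ℚ)) Nat.cast_injective


lemma A1 (k m : ℕ) (hm : 1 ≤ m) :
    ∑ j ∈ Finset.Icc m (k+1), (k.choose (j-1) : ℚ) * (stirlingFirst j m : ℚ) / (j.factorial : ℚ)
      = (cS (k+1) m : ℚ) / ((k+1).factorial : ℚ) := by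
  have h := congrArg (fun p : ℚ[X] => p.coeff m) (Lpoly k)
  simp only [Polynomial.finset_sum_coeff, Polynomial.coeff_C_mul, descPochhammer_coeff,
    ascPochhammer_coeff] at h
  calc ∑ j ∈ Finset.Icc m (k+1), (k.choose (j-1) : ℚ) * (stirlingFirst j m : ℚ) / (j.factorial : ℚ)
      = ∑ j ∈ Finset.Icc 1 (k+1), (k.choose (j-1) : ℚ) * (stirlingFirst j m : ℚ) / (j.factorial : ℚ) := by
        apply Finset.sum_subset (Finset.Icc_subset_Icc_left hm)
        intro j hj hj2
        simp only [Finset.mem_Icc] at hj hj2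
        rw [stirlingFirst_eq_zero_of_lt j m (by omega)]
        simp
    _ = ∑ j ∈ Finset.Icc 1 (k+1), (k.choose (j-1) : ℚ) / (j.factorial : ℚ) * (stirlingFirst j m : ℚ) :=
        Finset.sum_congr rfl fun j _ => by ring
    _ = (((k+1).factorial : ℚ))⁻¹ * (cS (k+1) m : ℚ) := h
    _ = (cS (k+1) m : ℚ) / ((k+1).factorial : ℚ) := by rw [inv_mul_eq_div]

/-- Sum of `1/(k_1 ⋯ k_m)` over `m`-tuples of positive integers summing to exactly `n`. -/
def Eml (n m : ℕ) : ℚ :=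
  ∑ k ∈ (Fintype.piFinset fun _ : Fin m => Finset.Icc 1 n).filter
      (fun k => ∑ i, k i = n),
    ∏ i, (1 : ℚ) / (k i : ℚ)

lemma Hml_succ (n m : ℕ) : Hml (n+1) m = Hml n m + Eml (n+1) m := by
  rw [Hml, Eml, Hml]
  rw [← Finset.sum_filter_add_sum_filter_not
    ((Fintype.piFinset fun _ : Fin m => Finset.Icc 1 (n+1)).filter (fun k => ∑ i, k i ≤ n+1))
    (fun k => ∑ i, k i ≤ n)]
  congr 1
  · rw [Finset.filter_filter]
    refine Finset.sum_congr ?_ fun _ _ => rfl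
    ext x
    simp only [Finset.mem_filter, Fintype.mem_piFinset, Finset.mem_Icc]
    constructor
    · rintro ⟨hx, -, hs⟩
      refine ⟨fun i => ⟨(hx i).1, ?_⟩, hs⟩
      calc x i ≤ ∑ j, x j := Finset.single_le_sum (fun j _ => Nat.zero_le _) (Finset.mem_univ i)
        _ ≤ n := hs
    · rintro ⟨hx, hs⟩
      exact ⟨fun i => ⟨(hx i).1, le_trans (hx i).2 (Nat.le_succ n)⟩, le_trans hs (Nat.le_succ n), hs⟩
  · rw [Finset.filter_filter]
    refine Finset.sum_congr ?_ fun _ _ => rfl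
    ext x
    simp only [Finset.mem_filter, Fintype.mem_piFinset, Finset.mem_Icc]
    constructor
    · rintro ⟨hx, hs, hs2⟩
      exact ⟨hx, by omega⟩
    · rintro ⟨hx, hs⟩
      exact ⟨hx, by omega, by omega⟩

lemma Eml_zero (m : ℕ) : Eml 0 m = if m = 0 then 1 else 0 := by
  cases m with
  | zero => simp [Eml]
  | succ m =>
      rw [Eml, if_neg (Nat.succ_ne_zero m)]
      convert Finset.sum_empty
      rw [Finset.eq_empty_iff_forall_notMem]
      intro x hx
      rw [Finset.mem_filter, Fintype.mem_piFinset] at hx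
      have := hx.1 0
      simp at this

lemma cS_succ_eq (m : ℕ) : ∀ n, 1 ≤ n →
    (cS n (m+1) : ℚ) = ((n-1).factorial : ℚ) * ∑ j ∈ Finset.range n, (cS j m : ℚ) / (j.factorial : ℚ) := by
  intro n
  induction n with
  | zero => omega
  | succ n ih =>
    intro _
    rcases Nat.eq_zero_or_pos n with h | h
    · subst h
      simp [cS]
    · have hfac : ((n.factorial : ℚ)) ≠ 0 := Nat.cast_ne_zero.2 n.factorial_ne_zero
      have hn' : (n : ℚ) * (((n-1).factorial : ℚ)) = (n.factorial : ℚ) := by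
        exact_mod_cast congrArg (Nat.cast : ℕ → ℚ) (Nat.mul_factorial_pred h.ne')
      have hrec : (cS (n+1) (m+1) : ℚ) = (cS n m : ℚ) + (n : ℚ) * (cS n (m+1) : ℚ) := by
        rw [show cS (n+1) (m+1) = cS n m + n * cS n (m+1) from rfl]
        push_cast
        ring
      rw [hrec, ih h, Finset.sum_range_succ, show n + 1 - 1 = n from rfl, ← mul_assoc, hn']
      field_simp
      ring


lemma Eml_slice (n m : ℕ) (i : Fin (m+1)) :
    ∑ x ∈ (Fintype.piFinset fun _ : Fin (m+1) => Finset.Icc 1 n).filter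
        (fun k => ∑ t, k t = n),
      ∏ j : Fin m, (1 : ℚ) / (x (i.succAbove j) : ℚ)
    = ∑ k ∈ Finset.Icc 1 n, Eml (n-k) m := by
  simp only [Eml]
  rw [Finset.sum_sigma']
  refine Finset.sum_nbij' (fun x => ⟨x i, fun j => x (i.succAbove j)⟩)
    (fun p => i.insertNth p.1 p.2) ?_ ?_ ?_ ?_ ?_
  · intro x hx
    rw [Finset.mem_filter, Fintype.mem_piFinset] at hx
    obtain ⟨hmem, hsum⟩ := hx
    have hsplit : x i + ∑ j : Fin m, x (i.succAbove j) = n := by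
      rw [← hsum]; exact (Fin.sum_univ_succAbove x i).symm
    have hle : ∀ j : Fin m, x (i.succAbove j) ≤ ∑ t : Fin m, x (i.succAbove t) := fun j =>
      Finset.single_le_sum (f := fun t : Fin m => x (i.succAbove t))
        (fun _ _ => Nat.zero_le _) (Finset.mem_univ j)
    have hx1 : ∀ t, 1 ≤ x t := fun t => (Finset.mem_Icc.1 (hmem t)).1
    rw [Finset.mem_sigma]
    refine ⟨hmem i, ?_⟩
    rw [Finset.mem_filter, Fintype.mem_piFinset]
    refine ⟨fun j => ?_, ?_⟩
    · show x (i.succAbove j) ∈ Finset.Icc 1 (n - x i)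
      rw [Finset.mem_Icc]
      exact ⟨hx1 _, by have := hle j; omega⟩
    · show ∑ t : Fin m, x (i.succAbove t) = n - x i
      omega
  · rintro ⟨k, y⟩ hp
    rw [Finset.mem_sigma, Finset.mem_filter, Fintype.mem_piFinset] at hp
    obtain ⟨hk, hy, hsy⟩ := hp
    dsimp only at hk hy hsy ⊢
    rw [Finset.mem_Icc] at hk
    rw [Finset.mem_filter, Fintype.mem_piFinset]
    refine ⟨fun t => ?_, ?_⟩
    · rcases eq_or_ne t i with rfl | ht
      · rw [Fin.insertNth_apply_same (α := fun _ => ℕ), Finset.mem_Icc]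
        omega
      · obtain ⟨j, rfl⟩ := Fin.exists_succAbove_eq ht
        rw [Fin.insertNth_apply_succAbove (α := fun _ => ℕ)]
        have := Finset.mem_Icc.1 (hy j)
        rw [Finset.mem_Icc]
        omega
    · rw [Fin.sum_univ_succAbove (i.insertNth k y) i,
        Fin.insertNth_apply_same (α := fun _ => ℕ)]
      simp only [Fin.insertNth_apply_succAbove (α := fun _ => ℕ)]
      omega
  · intro x _
    exact Fin.insertNth_self_removeNth i x
  · rintro ⟨k, y⟩ _
    dsimp only
    refine Sigma.ext ?_ (heq_of_eq ?_)
    · exact Fin.insertNth_apply_same (α := fun _ => ℕ) i k y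
    · funext j
      exact Fin.insertNth_apply_succAbove (α := fun _ => ℕ) i k y j
  · intro x _
    rfl

lemma Eml_rec (n m : ℕ) :
    (n : ℚ) * Eml n (m+1) = ((m : ℚ) + 1) * ∑ k ∈ Finset.Icc 1 n, Eml (n-k) m := by
  rw [Eml, Finset.mul_sum]
  have step1 : ∀ x ∈ (Fintype.piFinset fun _ : Fin (m+1) => Finset.Icc 1 n).filter
      (fun k => ∑ t, k t = n),
      (n : ℚ) * ∏ t, (1:ℚ)/(x t : ℚ)
        = ∑ i : Fin (m+1), ∏ j : Fin m, (1:ℚ)/(x (i.succAbove j) : ℚ) := by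
    intro x hx
    rw [Finset.mem_filter, Fintype.mem_piFinset] at hx
    have hxpos : ∀ t, (x t : ℚ) ≠ 0 := fun t => by
      have := Finset.mem_Icc.1 (hx.1 t)
      exact Nat.cast_ne_zero.2 (by omega)
    have hns : (n : ℚ) = ∑ t, (x t : ℚ) := by
      rw [← hx.2]; exact Nat.cast_sum _ _
    rw [hns, Finset.sum_mul]
    apply Finset.sum_congr rfl
    intro i _
    rw [Fin.prod_univ_succAbove (fun t => (1:ℚ)/(x t : ℚ)) i, ← mul_assoc]
    rw [show (x i : ℚ) * ((1:ℚ)/(x i : ℚ)) = 1 from by rw [mul_one_div, div_self (hxpos i)], one_mul]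
  rw [Finset.sum_congr rfl step1, Finset.sum_comm]
  rw [Finset.sum_congr rfl (fun i _ => Eml_slice n m i)]
  rw [Finset.sum_const, Finset.card_univ, Fintype.card_fin, nsmul_eq_mul]
  push_cast
  ring

lemma Eml_eq : ∀ m n : ℕ, Eml n m * (n.factorial : ℚ) = (m.factorial : ℚ) * (cS n m : ℚ) := by
  intro m
  induction m with
  | zero =>
    intro n
    rcases Nat.eq_zero_or_pos n with h|h
    · subst h; simp [Eml_zero, cS]
    · obtain ⟨k, rfl⟩ : ∃ k, n = k+1 := ⟨n-1, by omega⟩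
      have h1 : Eml (k+1) 0 = 0 := by
        rw [Eml]
        have hemp : (Fintype.piFinset fun _ : Fin 0 => Finset.Icc 1 (k+1)).filter
            (fun x => ∑ i, x i = k+1) = ∅ := by
          rw [Finset.eq_empty_iff_forall_notMem]
          intro x hx
          rw [Finset.mem_filter] at hx
          have := hx.2
          simp at this
        rw [hemp, Finset.sum_empty]
      rw [h1, show cS (k+1) 0 = 0 from rfl]
      simp
  | succ m ih =>
    intro n
    rcases Nat.eq_zero_or_pos n with h|h
    · subst h
      simp [Eml_zero, show cS 0 (m+1) = 0 from rfl]
    · have hrec := Eml_rec n m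
      have hS : ∑ k ∈ Finset.Icc 1 n, Eml (n-k) m = ∑ j ∈ Finset.range n, Eml j m := by
        refine Finset.sum_nbij' (fun k => n - k) (fun j => n - j) ?_ ?_ ?_ ?_ ?_
        · intro a ha
          simp only [Finset.mem_Icc] at ha
          simp only [Finset.mem_range]
          omega
        · intro a ha
          simp only [Finset.mem_range] at ha
          simp only [Finset.mem_Icc]
          omega
        · intro a ha
          simp only [Finset.mem_Icc] at ha
          show n - (n - a) = a
          omega
        · intro a ha
          simp only [Finset.mem_range] at ha
          show n - (n - a) = a
          omega
        · intro a ha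
          rfl
      have hE : ∀ j ∈ Finset.range n, Eml j m
          = (m.factorial : ℚ) * (cS j m : ℚ) / (j.factorial : ℚ) := by
        intro j _
        have h2 := ih j
        have hj : ((j.factorial : ℚ)) ≠ 0 := Nat.cast_ne_zero.2 j.factorial_ne_zero
        field_simp
        linear_combination h2
      have hsum : ∑ j ∈ Finset.range n, Eml j m
          = (m.factorial : ℚ) * ∑ j ∈ Finset.range n, (cS j m : ℚ)/(j.factorial:ℚ) := by
        rw [Finset.mul_sum]
        exact Finset.sum_congr rfl (fun j hj => by rw [hE j hj, mul_div_assoc])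
      rw [hS, hsum] at hrec
      rw [cS_succ_eq m n h]
      have hn1 : (n.factorial : ℚ) = (n : ℚ) * ((n-1).factorial : ℚ) := by
        exact_mod_cast congrArg (Nat.cast : ℕ → ℚ) (Nat.mul_factorial_pred h.ne').symm
      have hfact : ((m+1).factorial : ℚ) = ((m : ℚ)+1) * (m.factorial : ℚ) := by
        push_cast [Nat.factorial_succ]
        ring
      rw [hn1, hfact]
      linear_combination ((n-1).factorial : ℚ) * hrec

lemma keyQ (k m : ℕ) (hm : 1 ≤ m) :
    ∑ j ∈ Finset.Icc m (k+1), (k.choose (j-1) : ℚ) * (stirlingFirst j m : ℚ) / (j.factorial : ℚ)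
      = (Hml (k+1) m - Hml k m) / (m.factorial : ℚ) := by
  rw [A1 k m hm, Hml_succ k m]
  have h := Eml_eq m (k+1)
  have h1 : (((k+1).factorial : ℚ)) ≠ 0 := Nat.cast_ne_zero.2 (k+1).factorial_ne_zero
  have h2 : ((m.factorial : ℚ)) ≠ 0 := Nat.cast_ne_zero.2 m.factorial_ne_zero
  field_simp
  linear_combination -h

lemma gchoose_succ (r : ℂ) (k : ℕ) :
    gchoose r (k+1) = gchoose (r-1) (k+1) + gchoose (r-1) k := by
  rw [gchoose, gchoose, gchoose]
  have h1 : ∏ i ∈ Finset.range (k+1), (r - i) = r * ∏ i ∈ Finset.range k, (r - 1 - i) := by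
    rw [Finset.prod_range_succ']
    simp only [Nat.cast_zero, sub_zero]
    rw [mul_comm]
    congr 1
    apply Finset.prod_congr rfl
    intro i _
    push_cast
    ring
  have h2 : ∏ i ∈ Finset.range (k+1), (r - 1 - (i:ℂ))
      = (∏ i ∈ Finset.range k, (r - 1 - (i:ℂ))) * (r - 1 - k) := Finset.prod_range_succ _ _
  rw [h1, h2]
  have hkf : (((k+1).factorial : ℂ)) = ((k:ℂ)+1) * (k.factorial : ℂ) := by
    push_cast [Nat.factorial_succ]
    ring
  have hne : ((k.factorial : ℂ)) ≠ 0 := Nat.cast_ne_zero.2 k.factorial_ne_zero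
  have hne2 : ((k:ℂ)+1) ≠ 0 := by
    have : (((k+1:ℕ)):ℂ) ≠ 0 := Nat.cast_ne_zero.2 (Nat.succ_ne_zero k)
    push_cast at this
    exact this
  rw [hkf]
  field_simp
  ring


lemma gchoose_zero (r : ℂ) : gchoose r 0 = 1 := by
  simp [gchoose]

lemma stmt_aux (r : ℂ) (m : ℕ) (hm : 1 ≤ m) : ∀ n : ℕ,
    ∑ k ∈ Finset.range (n + 1), (-1) ^ k * gchoose (r - 1) k *
        ∑ j ∈ Finset.Icc m (k + 1),
          (k.choose (j - 1) : ℂ) * (stirlingFirst j m : ℂ) / (j.factorial : ℂ) =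
      (-1) ^ n * gchoose (r - 1) n * (1 / (m.factorial : ℂ)) * (Hml (n + 1) m : ℂ) -
        (1 / (m.factorial : ℂ)) *
          ∑ k ∈ Finset.range (n + 1), (-1) ^ k * gchoose r k * (Hml k m : ℂ) := by
  have hsumC : ∀ k : ℕ, (∑ j ∈ Finset.Icc m (k + 1),
      (k.choose (j - 1) : ℂ) * (stirlingFirst j m : ℂ) / (j.factorial : ℂ))
      = ((Hml (k+1) m : ℂ) - (Hml k m : ℂ)) / (m.factorial : ℂ) := by
    intro k
    have h2 := congrArg (fun q : ℚ => (q : ℂ)) (keyQ k m hm)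
    push_cast at h2
    exact h2
  intro n
  induction n with
  | zero =>
    rw [Finset.sum_range_one, Finset.sum_range_one, hsumC 0, gchoose_zero, gchoose_zero]
    ring
  | succ n ih =>
    rw [Finset.sum_range_succ, ih, hsumC (n+1),
      Finset.sum_range_succ (fun k => (-1) ^ k * gchoose r k * (Hml k m : ℂ)) (n+1),
      gchoose_succ r n]
    ring

theorem stmt_16 (r : ℂ) (n m : ℕ) (hm : 1 ≤ m) (hn : 1 ≤ n) :
    ∑ k ∈ Finset.range (n + 1), (-1) ^ k * gchoose (r - 1) k *
        ∑ j ∈ Finset.Icc m (k + 1),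
          (k.choose (j - 1) : ℂ) * (stirlingFirst j m : ℂ) / (j.factorial : ℂ) =
      (-1) ^ n * gchoose (r - 1) n * (1 / (m.factorial : ℂ)) * (Hml (n + 1) m : ℂ) -
        (1 / (m.factorial : ℂ)) *
          ∑ k ∈ Finset.range (n + 1), (-1) ^ k * gchoose r k * (Hml k m : ℂ) := by
  exact stmt_aux r m hm n
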